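/- Let v > w ≥ 0, V = 2^v, W = 2^w, and m ≥ V + W. For p = 2^{V+W-1} + 2^{W-1}, the p-th point of the two-dimensional Sobol' sequence is x_p = (2^{-W} + 2^{-V-W}, 2^{-V} - 2^{-V-W}). -/

import Mathlib

open Finset

/-- The `i`-th binary digit of `n` (1-indexed: `n = Σ nᵢ 2^(i-1)`). -/
def bit (n i : ℕ) : ℕ := if Nat.testBit n (i-1) then 1 else 0

/-- `φ` of the digit vector of `n` truncated to `m` digits: `Σ nᵢ 2^(-i)`. -/
noncomputable def phi (m n : ℕ) : ℝ :=
  ∑ i ∈ Finset.Icc 1 m, (bit n i : ℝ) * (2:ℝ) ^ (-(i:ℤ))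

/-- The `i`-th coordinate of `P_m · (digit vector of n)` over `F₂`, where
`P_m[i][j] = C(j-1, i-1) mod 2` is the upper-triangular Pascal matrix. -/
def pbit (m n i : ℕ) : ℕ :=
  (∑ j ∈ Finset.Icc 1 m, (Nat.choose (j-1) (i-1) % 2) * bit n j) % 2

/-- `φ(P_m · n)`. -/
noncomputable def phiP (m n : ℕ) : ℝ :=
  ∑ i ∈ Finset.Icc 1 m, (pbit m n i : ℝ) * (2:ℝ) ^ (-(i:ℤ))

/-- The `n`-th point of the two-dimensional Sobol' sequence (with `n < 2^m`). -/
noncomputable def sobol (m n : ℕ) : ℝ × ℝ := (phi m n, phiP m n)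

/-- ℓ^∞ distance on ℝ². -/
noncomputable def linf (a b : ℝ × ℝ) : ℝ := max |a.1 - b.1| |a.2 - b.2|

/-- ℓ^∞ separation radius of the first `N` Sobol' points (digit length `m`). -/
noncomputable def sep (m N : ℕ) : ℝ :=
  (1/2) * sInf {d : ℝ | ∃ p q : ℕ, p < N ∧ q < N ∧ p ≠ q ∧ d = linf (sobol m p) (sobol m q)}

/-- ℓ^∞ covering radius of the first `N` Sobol' points (digit length `m`). -/
noncomputable def cov (m N : ℕ) : ℝ :=
  sSup {r : ℝ | ∃ x : ℝ × ℝ, x.1 ∈ Set.Icc (0:ℝ) 1 ∧ x.2 ∈ Set.Icc (0:ℝ) 1 ∧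
    r = sInf {d : ℝ | ∃ n : ℕ, n < N ∧ d = linf x (sobol m n)}}

section Aux

lemma lucas2 (n k : ℕ) :
    Nat.choose n k % 2 = (Nat.choose (n % 2) (k % 2) * Nat.choose (n / 2) (k / 2)) % 2 :=
  Choose.choose_modEq_choose_mod_mul_choose_div_nat

lemma chooseOne (r : ℕ) (h : r < 2) : Nat.choose 1 r = 1 := by
  interval_cases r <;> rfl

lemma lemA : ∀ w k : ℕ, k < 2 ^ w → Nat.choose (2 ^ w - 1) k % 2 = 1 := by
  intro w
  induction w with
  | zero => intro k hk; interval_cases k; rfl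
  | succ w ih =>
    intro k hk
    have h2 : 2 ^ (w + 1) = 2 * 2 ^ w := by ring
    have hp : (0:ℕ) < 2 ^ w := Nat.pow_pos (by norm_num)
    rw [lucas2]
    have hm : (2 ^ (w + 1) - 1) % 2 = 1 := by omega
    have hd : (2 ^ (w + 1) - 1) / 2 = 2 ^ w - 1 := by omega
    rw [hm, hd, chooseOne _ (Nat.mod_lt _ (by norm_num)), one_mul,
      ih (k / 2) (by omega)]

lemma lemB : ∀ v s k : ℕ, s < 2 ^ v → k < 2 ^ v →
    Nat.choose (2 ^ v + s) k % 2 = Nat.choose s k % 2 ∧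
    Nat.choose (2 ^ v + s) (2 ^ v + k) % 2 = Nat.choose s k % 2 := by
  intro v
  induction v with
  | zero =>
    intro s k hs hk
    interval_cases s <;> interval_cases k <;> exact ⟨rfl, rfl⟩
  | succ v ih =>
    intro s k hs hk
    have h2 : 2 ^ (v + 1) = 2 * 2 ^ v := by ring
    have hp : (0:ℕ) < 2 ^ v := Nat.pow_pos (by norm_num)
    have hs2 : s / 2 < 2 ^ v := by omega
    have hk2 : k / 2 < 2 ^ v := by omega
    obtain ⟨ih1, ih2⟩ := ih (s / 2) (k / 2) hs2 hk2
    have e1 : (2 ^ (v + 1) + s) % 2 = s % 2 := by omega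
    have e2 : (2 ^ (v + 1) + s) / 2 = 2 ^ v + s / 2 := by omega
    have e3 : (2 ^ (v + 1) + k) % 2 = k % 2 := by omega
    have e4 : (2 ^ (v + 1) + k) / 2 = 2 ^ v + k / 2 := by omega
    constructor
    · rw [lucas2, lucas2 s k, e1, e2, Nat.mul_mod, ih1, ← Nat.mul_mod]
    · rw [lucas2, lucas2 s k, e1, e2, e3, e4, Nat.mul_mod, ih2, ← Nat.mul_mod]

lemma keyParity (v w : ℕ) (hvw : w < v) (k : ℕ) :
    (Nat.choose (2^w - 1) k % 2 + Nat.choose (2^v + 2^w - 1) k % 2) % 2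
      = if 2^v ≤ k ∧ k < 2^v + 2^w then 1 else 0 := by
  have hwv : 2^w < 2^v := Nat.pow_lt_pow_right (by norm_num) hvw
  have hw : 0 < 2^w := Nat.pow_pos (by norm_num)
  have hrw : 2^v + 2^w - 1 = 2^v + (2^w - 1) := by omega
  rcases lt_or_ge k (2^w) with h1 | h1
  · rw [hrw, (lemB v (2^w-1) k (by omega) (by omega)).1, lemA w k h1]
    rw [if_neg (by omega)]
  rcases lt_or_ge k (2^v) with h2 | h2
  · rw [hrw, (lemB v (2^w-1) k (by omega) (by omega)).1,
      Nat.choose_eq_zero_of_lt (by omega), if_neg (by omega)]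
  rcases lt_or_ge k (2^v + 2^w) with h3 | h3
  · have hk : k = 2^v + (k - 2^v) := by omega
    rw [hrw, hk, (lemB v (2^w-1) (k - 2^v) (by omega) (by omega)).2,
      lemA w (k - 2^v) (by omega), Nat.choose_eq_zero_of_lt (by omega), if_pos (by omega)]
  · rw [Nat.choose_eq_zero_of_lt (by omega), Nat.choose_eq_zero_of_lt (by omega),
      if_neg (by omega)]

lemma bitp {a b : ℕ} (hba : b < a) (k : ℕ) :
    Nat.testBit (2^a + 2^b) k = (decide (k = a) || decide (k = b)) := by
  rcases lt_trichotomy k a with h | h | h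
  · rw [Nat.testBit_two_pow_add_gt h, Nat.testBit_two_pow]
    have : ¬ k = a := by omega
    simp [this, eq_comm]
  · subst h
    rw [Nat.testBit_two_pow_add_eq, Nat.testBit_two_pow]
    have h1 : ¬ b = k := by omega
    have h2 : ¬ k = b := by omega
    simp [h1, h2]
  · have hlt : 2^a + 2^b < 2^k := by
      have hb : 2^b < 2^a := Nat.pow_lt_pow_right (by norm_num) hba
      have e : 2^a + 2^a = 2^(a+1) := by ring
      have h3 : 2^(a+1) ≤ 2^k := Nat.pow_le_pow_right (by norm_num) h
      omega
    rw [Nat.testBit_lt_two_pow hlt]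
    have h1 : ¬ k = a := by omega
    have h2 : ¬ k = b := by omega
    simp [h1, h2]

lemma sum_bit {M : Type*} [AddCommMonoid M] (m a b : ℕ) (hba : b < a) (ham : a + 1 ≤ m)
    (c : ℕ → M) :
    ∑ j ∈ Icc 1 m, bit (2^a + 2^b) j • c j = c (b+1) + c (a+1) := by
  have hb1 : b+1 ∈ Icc 1 m := mem_Icc.mpr ⟨by omega, by omega⟩
  have ha1 : a+1 ∈ Icc 1 m := mem_Icc.mpr ⟨by omega, by omega⟩
  have hcong : ∀ j ∈ Icc 1 m, bit (2^a + 2^b) j • c j =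
      (if j = b+1 then c j else 0) + (if j = a+1 then c j else 0) := by
    intro j hj
    rw [mem_Icc] at hj
    rw [bit, bitp hba]
    by_cases hjb : j = b+1
    · have e : j - 1 = b := by omega
      have h1 : ¬ (j - 1 = a) := by omega
      have hne : b ≠ a := by omega
      simp [hjb, e, h1, hne]
    · by_cases hja : j = a+1
      · have e : j - 1 = a := by omega
        have h2 : ¬ (j - 1 = b) := by omega
        have hne : a ≠ b := by omega
        simp [hja, hjb, e, h2, hne]
      · have h1 : ¬ (j - 1 = a) := by omega
        have h2 : ¬ (j - 1 = b) := by omega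
        simp [hja, hjb, h1, h2]
  rw [Finset.sum_congr rfl hcong, Finset.sum_add_distrib,
    Finset.sum_ite_eq' (Icc 1 m) (b+1) c, Finset.sum_ite_eq' (Icc 1 m) (a+1) c,
    if_pos hb1, if_pos ha1]

lemma geom (A : ℕ) : ∀ B : ℕ, ∑ i ∈ Icc (A+1) (A+B), (2:ℝ)^(-(i:ℤ))
    = (2:ℝ)^(-(A:ℤ)) - (2:ℝ)^(-(A:ℤ)-(B:ℤ)) := by
  intro B
  induction B with
  | zero => simp
  | succ B ih =>
    have e : A + (B+1) = (A+B) + 1 := by omega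
    rw [e, Finset.sum_Icc_succ_top (by omega), ih]
    have h1 : (2:ℝ)^(-(A:ℤ)-(B:ℤ)) = 2 * (2:ℝ)^(-(((A+B)+1:ℕ):ℤ)) := by
      rw [show -(A:ℤ)-(B:ℤ) = (-(((A+B)+1:ℕ):ℤ)) + 1 by push_cast; ring,
        zpow_add_one₀ (by norm_num : (2:ℝ) ≠ 0)]
      ring
    have h2 : (2:ℝ)^(-(A:ℤ)-((B+1:ℕ):ℤ)) = (2:ℝ)^(-(((A+B)+1:ℕ):ℤ)) := by
      congr 1; push_cast; ring
    rw [h2]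
    linarith [h1]

end Aux

theorem stmt_12 (v w m : ℕ) (hvw : w < v) (hm : 2 ^ v + 2 ^ w ≤ m) :
    sobol m (2 ^ (2 ^ v + 2 ^ w - 1) + 2 ^ (2 ^ w - 1)) =
      ((2:ℝ) ^ (-(2 ^ w : ℤ)) + (2:ℝ) ^ (-(2 ^ v : ℤ) - (2 ^ w : ℤ)),
       (2:ℝ) ^ (-(2 ^ v : ℤ)) - (2:ℝ) ^ (-(2 ^ v : ℤ) - (2 ^ w : ℤ))) := by
  have hw : 0 < 2 ^ w := Nat.pow_pos (by norm_num)
  have hv : 0 < 2 ^ v := Nat.pow_pos (by norm_num)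
  have hwv : 2 ^ w < 2 ^ v := Nat.pow_lt_pow_right (by norm_num) hvw
  set a : ℕ := 2 ^ v + 2 ^ w - 1 with ha
  set b : ℕ := 2 ^ w - 1 with hb
  have hba : b < a := by omega
  have ham : a + 1 ≤ m := by omega
  have hb1 : b + 1 = 2 ^ w := by omega
  have ha1 : a + 1 = 2 ^ v + 2 ^ w := by omega
  unfold sobol
  refine Prod.ext ?_ ?_
  · show phi m (2 ^ a + 2 ^ b) = _
    unfold phi
    have : ∀ i ∈ Icc 1 m, (bit (2 ^ a + 2 ^ b) i : ℝ) * (2:ℝ) ^ (-(i:ℤ))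
        = bit (2 ^ a + 2 ^ b) i • ((2:ℝ) ^ (-(i:ℤ))) := by
      intro i _
      rw [nsmul_eq_mul]
    rw [Finset.sum_congr rfl this, sum_bit m a b hba ham, hb1, ha1]
    push_cast
    ring_nf
  · show phiP m (2 ^ a + 2 ^ b) = _
    have hpbit : ∀ i ∈ Icc 1 m, pbit m (2 ^ a + 2 ^ b) i
        = if 2 ^ v + 1 ≤ i ∧ i ≤ 2 ^ v + 2 ^ w then 1 else 0 := by
      intro i hi
      rw [mem_Icc] at hi
      unfold pbit
      have hsummand : ∀ j ∈ Icc 1 m,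
          (Nat.choose (j-1) (i-1) % 2) * bit (2 ^ a + 2 ^ b) j
            = bit (2 ^ a + 2 ^ b) j • (Nat.choose (j-1) (i-1) % 2) := by
        intro j _
        rw [smul_eq_mul, mul_comm]
      rw [Finset.sum_congr rfl hsummand,
        sum_bit m a b hba ham (fun j => Nat.choose (j-1) (i-1) % 2)]
      simp only [Nat.add_sub_cancel]
      rw [hb, ha] at *
      rw [keyParity v w hvw (i-1)]
      by_cases hc : 2 ^ v ≤ i - 1 ∧ i - 1 < 2 ^ v + 2 ^ w
      · rw [if_pos hc, if_pos (by omega)]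
      · rw [if_neg hc, if_neg (by omega)]
    unfold phiP
    have hstep : ∀ i ∈ Icc 1 m, (pbit m (2 ^ a + 2 ^ b) i : ℝ) * (2:ℝ) ^ (-(i:ℤ))
        = if i ∈ Icc (2 ^ v + 1) (2 ^ v + 2 ^ w) then (2:ℝ) ^ (-(i:ℤ)) else 0 := by
      intro i hi
      by_cases hc : 2 ^ v + 1 ≤ i ∧ i ≤ 2 ^ v + 2 ^ w
      · rw [hpbit i hi, if_pos hc, if_pos (mem_Icc.mpr hc)]; norm_num
      · rw [hpbit i hi, if_neg hc, if_neg (fun h => hc (mem_Icc.mp h))]; norm_num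
    rw [Finset.sum_congr rfl hstep, Finset.sum_ite_mem,
      Finset.inter_eq_right.mpr (Finset.Icc_subset_Icc (by omega) (by omega)),
      geom (2 ^ v) (2 ^ w)]
    push_cast
    ring_nf
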